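/- arXiv:1001.3044 — 6 statements merged into one kernel-verified Lean document; each statement's English description precedes it below -/
import Mathlib

section
/- Construction of the fixed-point set in the lower bound for randomized mutual exclusion (core combinatorial content of Theorem 3): Let n and T be positive integers with n ≥ 2T + 2, and suppose each process p ∈ {0,...,n−1} has a transmission schedule (ℓ(p), π(p)) with 1 ≤ ℓ(p) ≤ T. Then there exists a subset S ⊆ {0,...,n−1} with |S| ≥ 2 such that: (i) for every round i with 1 ≤ i ≤ T, it is NOT the case that exactly one process p ∈ S transmits at round i; and (ii) at least two processes p ∈ S attain the minimum schedule length, i.e., |{p ∈ S : ℓ(p) = min_{q∈S} ℓ(q)}| ≥ 2. -/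
open Finset

private lemma fps_key (n T : ℕ) (ℓ : Fin n → ℕ) (π : Fin n → ℕ → Bool)
    (hℓ : ∀ p : Fin n, 1 ≤ ℓ p ∧ ℓ p ≤ T) :
    ∀ k (S : Finset (Fin n)), S.card ≤ k → S.Nonempty →
      ((Finset.Icc 1 T).filter
          (fun i => 0 < (S.filter (fun p => i ≤ ℓ p ∧ π p i = true)).card)).card
        + (T + 1 - sInf (ℓ '' (S : Set (Fin n)))) + 2 ≤ S.card →
      ∃ S' : Finset (Fin n), S' ⊆ S ∧ S'.Nonempty ∧
        (∀ i, 1 ≤ i → i ≤ T →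
          (S'.filter (fun p => i ≤ ℓ p ∧ π p i = true)).card ≠ 1) ∧
        2 ≤ (S'.filter (fun p => ℓ p = sInf (ℓ '' (S' : Set (Fin n))))).card := by
  -- some general facts
  have hmem : ∀ S : Finset (Fin n), S.Nonempty →
      ∃ q ∈ S, ℓ q = sInf (ℓ '' (S : Set (Fin n))) := by
    intro S hS
    obtain ⟨q0, hq0⟩ := hS
    have h : sInf (ℓ '' (S : Set (Fin n))) ∈ ℓ '' (S : Set (Fin n)) :=
      Nat.sInf_mem ⟨ℓ q0, q0, by simpa using hq0, rfl⟩
    obtain ⟨q, hq, hq'⟩ := h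
    exact ⟨q, by simpa using hq, hq'⟩
  have hle : ∀ (A B : Finset (Fin n)), A ⊆ B → A.Nonempty →
      sInf (ℓ '' (B : Set (Fin n))) ≤ sInf (ℓ '' (A : Set (Fin n))) := by
    intro A B hAB hA
    obtain ⟨q, hq, hq'⟩ := hmem A hA
    rw [← hq']
    exact Nat.sInf_le ⟨q, by simpa using hAB hq, rfl⟩
  intro k
  induction k with
  | zero =>
      intro S hcard _ hinv
      omega
  | succ k ih =>
      intro S hcard hS hinv
      -- notation
      set mS := sInf (ℓ '' (S : Set (Fin n))) with hmS
      obtain ⟨q, hqS, hq⟩ := hmem S hS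
      have hm1 : 1 ≤ mS := by rw [hmS, ← hq]; exact (hℓ q).1
      have hmT : mS ≤ T := by rw [hmS, ← hq]; exact (hℓ q).2
      have hcard3 : 3 ≤ S.card := by omega
      by_cases h1 : ∃ i, 1 ≤ i ∧ i ≤ T ∧
          (S.filter (fun p => i ≤ ℓ p ∧ π p i = true)).card = 1
      · obtain ⟨i, hi1, hiT, hci⟩ := h1
        obtain ⟨p, hp⟩ := Finset.card_eq_one.mp hci
        have hpS : p ∈ S := by
          have : p ∈ S.filter (fun p => i ≤ ℓ p ∧ π p i = true) := by
            rw [hp]; exact Finset.mem_singleton_self p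
          exact (Finset.mem_filter.mp this).1
        set S₂ := S.erase p with hS₂
        have hsub : S₂ ⊆ S := Finset.erase_subset p S
        have hcard2 : S₂.card = S.card - 1 := Finset.card_erase_of_mem hpS
        have hS₂ne : S₂.Nonempty := Finset.card_pos.mp (by omega)
        -- round i has no transmitter in S₂
        have hzero : (S₂.filter (fun p => i ≤ ℓ p ∧ π p i = true)).card = 0 := by
          rw [hS₂, Finset.filter_erase, hp]
          simp
        -- live rounds of S₂ ⊆ (live rounds of S) minus i
        have hlive : ((Finset.Icc 1 T).filter
              (fun j => 0 < (S₂.filter (fun p => j ≤ ℓ p ∧ π p j = true)).card)).card + 1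
            ≤ ((Finset.Icc 1 T).filter
              (fun j => 0 < (S.filter (fun p => j ≤ ℓ p ∧ π p j = true)).card)).card := by
          have hisub : ((Finset.Icc 1 T).filter
              (fun j => 0 < (S₂.filter (fun p => j ≤ ℓ p ∧ π p j = true)).card)) ⊆
              (((Finset.Icc 1 T).filter
              (fun j => 0 < (S.filter (fun p => j ≤ ℓ p ∧ π p j = true)).card)).erase i) := by
            intro j hj
            rw [Finset.mem_filter] at hj
            rw [Finset.mem_erase, Finset.mem_filter]
            refine ⟨?_, hj.1, lt_of_lt_of_le hj.2 (Finset.card_le_card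
              (Finset.filter_subset_filter _ hsub))⟩
            intro hji
            rw [hji, hzero] at hj
            exact lt_irrefl 0 hj.2
          have hiin : i ∈ ((Finset.Icc 1 T).filter
              (fun j => 0 < (S.filter (fun p => j ≤ ℓ p ∧ π p j = true)).card)) := by
            rw [Finset.mem_filter]
            exact ⟨Finset.mem_Icc.mpr ⟨hi1, hiT⟩, by omega⟩
          have := Finset.card_le_card hisub
          rw [Finset.card_erase_of_mem hiin] at this
          have hpos : 0 < ((Finset.Icc 1 T).filter
              (fun j => 0 < (S.filter (fun p => j ≤ ℓ p ∧ π p j = true)).card)).card :=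
            Finset.card_pos.mpr ⟨i, hiin⟩
          omega
        have hmono : mS ≤ sInf (ℓ '' (S₂ : Set (Fin n))) := hle S₂ S hsub hS₂ne
        obtain ⟨S', hS'sub, hS'ne, hS'i, hS'ii⟩ := ih S₂ (by omega) hS₂ne (by omega)
        exact ⟨S', hS'sub.trans hsub, hS'ne, hS'i, hS'ii⟩
      · push_neg at h1
        have hcond : ∀ i, 1 ≤ i → i ≤ T →
            (S.filter (fun p => i ≤ ℓ p ∧ π p i = true)).card ≠ 1 := by
          intro i a b; exact h1 i a b
        by_cases h2 : 2 ≤ (S.filter (fun p => ℓ p = mS)).card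
        · exact ⟨S, Finset.Subset.refl S, hS, hcond, h2⟩
        · -- exactly one minimum attainer
          have hone : (S.filter (fun p => ℓ p = mS)).card = 1 := by
            have : q ∈ S.filter (fun p => ℓ p = mS) :=
              Finset.mem_filter.mpr ⟨hqS, hq⟩
            have := Finset.card_pos.mpr ⟨q, this⟩
            omega
          obtain ⟨p, hp⟩ := Finset.card_eq_one.mp hone
          have hpS : p ∈ S := by
            have : p ∈ S.filter (fun r => ℓ r = mS) := by
              rw [hp]; exact Finset.mem_singleton_self p
            exact (Finset.mem_filter.mp this).1
          set S₂ := S.erase p with hS₂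
          have hsub : S₂ ⊆ S := Finset.erase_subset p S
          have hcard2 : S₂.card = S.card - 1 := Finset.card_erase_of_mem hpS
          have hS₂ne : S₂.Nonempty := Finset.card_pos.mp (by omega)
          -- minimum strictly increases
          have hmS2 : mS + 1 ≤ sInf (ℓ '' (S₂ : Set (Fin n))) := by
            obtain ⟨r, hrS₂, hr⟩ := hmem S₂ hS₂ne
            have hrge : mS ≤ ℓ r := Nat.sInf_le ⟨r, by simpa using hsub hrS₂, rfl⟩
            have hrne : ℓ r ≠ mS := by
              intro hcontra
              have : r ∈ S.filter (fun x => ℓ x = mS) :=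
                Finset.mem_filter.mpr ⟨hsub hrS₂, hcontra⟩
              rw [hp, Finset.mem_singleton] at this
              exact (Finset.mem_erase.mp hrS₂).1 this
            omega
          have hlive : ((Finset.Icc 1 T).filter
              (fun j => 0 < (S₂.filter (fun p => j ≤ ℓ p ∧ π p j = true)).card)).card
              ≤ ((Finset.Icc 1 T).filter
              (fun j => 0 < (S.filter (fun p => j ≤ ℓ p ∧ π p j = true)).card)).card := by
            apply Finset.card_le_card
            intro j hj
            rw [Finset.mem_filter] at hj ⊢
            exact ⟨hj.1, lt_of_lt_of_le hj.2 (Finset.card_le_card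
              (Finset.filter_subset_filter _ hsub))⟩
          obtain ⟨S', hS'sub, hS'ne, hS'i, hS'ii⟩ := ih S₂ (by omega) hS₂ne (by omega)
          exact ⟨S', hS'sub.trans hsub, hS'ne, hS'i, hS'ii⟩

/-- Construction of the fixed-point set in the lower bound for randomized
mutual exclusion (core combinatorial content of Theorem 3).
Process `p` transmits at round `i` iff `i ≤ ℓ p ∧ π p i = true`. -/
theorem fixed_point_set_exists (n T : ℕ) (hT : 0 < T) (hn : 2 * T + 2 ≤ n)
    (ℓ : Fin n → ℕ) (π : Fin n → ℕ → Bool)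
    (hℓ : ∀ p : Fin n, 1 ≤ ℓ p ∧ ℓ p ≤ T) :
    ∃ S : Set (Fin n), 2 ≤ S.ncard ∧
      (∀ i : ℕ, 1 ≤ i → i ≤ T →
        ¬ ∃! p : Fin n, p ∈ S ∧ (i ≤ ℓ p ∧ π p i = true)) ∧
      2 ≤ {p ∈ S | ℓ p = sInf (ℓ '' S)}.ncard := by
  have hn0 : 0 < n := by omega
  have hne : (Finset.univ : Finset (Fin n)).Nonempty :=
    ⟨⟨0, hn0⟩, Finset.mem_univ _⟩
  -- initial invariant
  have hlive : ((Finset.Icc 1 T).filter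
      (fun i => 0 < ((Finset.univ : Finset (Fin n)).filter
        (fun p => i ≤ ℓ p ∧ π p i = true)).card)).card ≤ T := by
    calc ((Finset.Icc 1 T).filter _).card ≤ (Finset.Icc 1 T).card :=
          Finset.card_filter_le _ _
      _ = T := by rw [Nat.card_Icc]; omega
  have hm1 : 1 ≤ sInf (ℓ '' ((Finset.univ : Finset (Fin n)) : Set (Fin n))) := by
    have h : sInf (ℓ '' ((Finset.univ : Finset (Fin n)) : Set (Fin n))) ∈
        ℓ '' ((Finset.univ : Finset (Fin n)) : Set (Fin n)) :=
      Nat.sInf_mem ⟨ℓ ⟨0, hn0⟩, ⟨0, hn0⟩, by simp, rfl⟩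
    obtain ⟨q, _, hq⟩ := h
    exact hq ▸ (hℓ q).1
  obtain ⟨S', hS'sub, hS'ne, hS'i, hS'ii⟩ :=
    fps_key n T ℓ π hℓ n Finset.univ (by simp) hne
      (by rw [Finset.card_univ, Fintype.card_fin]; omega)
  refine ⟨(S' : Set (Fin n)), ?_, ?_, ?_⟩
  · rw [Set.ncard_coe_finset]
    exact le_trans hS'ii (Finset.card_le_card (Finset.filter_subset _ _))
  · rintro i hi1 hiT ⟨p, ⟨hpS, hptr⟩, hu⟩
    apply hS'i i hi1 hiT
    rw [Finset.card_eq_one]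
    refine ⟨p, ?_⟩
    ext x
    rw [Finset.mem_filter, Finset.mem_singleton]
    constructor
    · rintro ⟨hxS, hxtr⟩
      exact hu x ⟨hxS, hxtr⟩
    · rintro rfl
      exact ⟨hpS, hptr⟩
  · have heq : {p | p ∈ (S' : Set (Fin n)) ∧ ℓ p = sInf (ℓ '' (S' : Set (Fin n)))} =
        ((S'.filter (fun p => ℓ p = sInf (ℓ '' (S' : Set (Fin n))))) : Set (Fin n)) := by
      ext x
      simp [Finset.mem_filter]
    rw [heq, Set.ncard_coe_finset]
    exact hS'ii
end

section
/- Stabilization and size of the removal sequence (paper's property 1 of the set P*): For the sequence of sets P_0 ⊇ P_1 ⊇ P_2 ⊇ ... defined by the odd/even removal rules, there exists an index j₀ such that P_j = P_{j₀} for all j ≥ j₀; moreover |P_{j₀}| ≥ n − 2T, so in particular if n ≥ 2T + 2 then the eventually-constant value P* = P_{j₀} satisfies |P*| ≥ 2. -/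
/-- Stabilization and size of the removal sequence (paper's property 1 of `P*`). -/
theorem removal_sequence_stabilizes (n T : ℕ) (hT : 0 < T)
    (ℓ : Fin n → ℕ) (π : Fin n → ℕ → Bool)
    (hℓ : ∀ p : Fin n, 1 ≤ ℓ p ∧ ℓ p ≤ T)
    (P : ℕ → Set (Fin n))
    (hP0 : P 0 = Set.univ)
    (hodd : ∀ j : ℕ, P (2 * j + 1) = P (2 * j) \
      {p ∈ P (2 * j) | ∃ i : ℕ, 1 ≤ i ∧ i ≤ T ∧ (i ≤ ℓ p ∧ π p i = true) ∧
        ∀ q ∈ P (2 * j), q ≠ p → ¬ (i ≤ ℓ q ∧ π q i = true)})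
    (heven : ∀ j : ℕ, P (2 * j + 2) = P (2 * j + 1) \
      {p ∈ P (2 * j + 1) | ∀ q ∈ P (2 * j + 1), q ≠ p → ℓ p < ℓ q}) :
    ∃ j₀ : ℕ, (∀ j : ℕ, j₀ ≤ j → P j = P j₀) ∧
      n - 2 * T ≤ (P j₀).ncard ∧
      (2 * T + 2 ≤ n → 2 ≤ (P j₀).ncard) := by
  classical
  -- the chain is decreasing
  have hstep : ∀ j : ℕ, P (j + 1) ⊆ P j := by
    intro j
    rcases Nat.even_or_odd j with ⟨k, hk⟩ | ⟨k, hk⟩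
    · have hj : j = 2 * k := by omega
      subst hj
      rw [hodd k]; exact Set.diff_subset
    · have hj : j + 1 = 2 * k + 2 := by omega
      rw [hj, heven k]
      have : j = 2 * k + 1 := by omega
      rw [this]; exact Set.diff_subset
  have hmono : ∀ a b : ℕ, a ≤ b → P b ⊆ P a := by
    intro a b hab
    induction b, hab using Nat.le_induction with
    | base => exact subset_rfl
    | succ m hm ih => exact (hstep m).trans ih
  -- stabilization: pick an index of minimal cardinality
  have hne : (Set.range fun j => (P j).ncard).Nonempty := ⟨(P 0).ncard, ⟨0, rfl⟩⟩
  obtain ⟨j₀, hj₀⟩ := Nat.sInf_mem hne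
  have hmin : ∀ j : ℕ, (P j₀).ncard ≤ (P j).ncard := by
    intro j
    have h : (P j₀).ncard = sInf (Set.range fun j => (P j).ncard) := hj₀
    rw [h]; exact Nat.sInf_le ⟨j, rfl⟩
  have hstab : ∀ j : ℕ, j₀ ≤ j → P j = P j₀ := by
    intro j hj
    exact Set.eq_of_subset_of_ncard_le (hmono j₀ j hj) (hmin j)
  refine ⟨j₀, hstab, ?_⟩
  -- removed sets
  set A : Set (Fin n) := {p | ∃ k, p ∈ P (2 * k) ∧ p ∉ P (2 * k + 1)} with hA
  set B : Set (Fin n) := {p | ∃ k, p ∈ P (2 * k + 1) ∧ p ∉ P (2 * k + 2)} with hB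
  -- every removed process is in A ∪ B
  have hdecomp : (P j₀)ᶜ ⊆ A ∪ B := by
    intro p hp
    have h0 : p ∈ P 0 := by rw [hP0]; exact Set.mem_univ p
    have hex : ∃ j, p ∉ P j := ⟨j₀, hp⟩
    have hm := Nat.find_spec hex
    have hmne : Nat.find hex ≠ 0 := by
      intro h; rw [h] at hm; exact hm h0
    obtain ⟨j, hj⟩ := Nat.exists_eq_succ_of_ne_zero hmne
    rw [hj] at hm
    have hmem : p ∈ P j := by
      by_contra hc
      exact (Nat.find_min hex (by omega : j < Nat.find hex)) hc
    rcases Nat.even_or_odd j with ⟨k, hk⟩ | ⟨k, hk⟩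
    · left
      refine ⟨k, ?_, ?_⟩
      · have : j = 2 * k := by omega
        rwa [this] at hmem
      · have : j.succ = 2 * k + 1 := by omega
        rwa [this] at hm
    · right
      refine ⟨k, ?_, ?_⟩
      · have : j = 2 * k + 1 := by omega
        rwa [this] at hmem
      · have : j.succ = 2 * k + 2 := by omega
        rwa [this] at hm
  -- witness data for odd removals
  have hAw : ∀ p : Fin n, ∃ k i : ℕ, p ∈ A →
      (p ∈ P (2 * k) ∧ 1 ≤ i ∧ i ≤ T ∧ (i ≤ ℓ p ∧ π p i = true) ∧
        ∀ q ∈ P (2 * k), q ≠ p → ¬ (i ≤ ℓ q ∧ π q i = true)) := by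
    intro p
    by_cases hp : p ∈ A
    · obtain ⟨k, hk1, hk2⟩ := hp
      rw [hodd k] at hk2
      have : p ∈ {p ∈ P (2 * k) | ∃ i : ℕ, 1 ≤ i ∧ i ≤ T ∧ (i ≤ ℓ p ∧ π p i = true) ∧
          ∀ q ∈ P (2 * k), q ≠ p → ¬ (i ≤ ℓ q ∧ π q i = true)} := by
        by_contra hc
        exact hk2 ⟨hk1, hc⟩
      obtain ⟨-, i, h1, h2, h3, h4⟩ := this
      exact ⟨k, i, fun _ => ⟨hk1, h1, h2, h3, h4⟩⟩
    · exact ⟨0, 0, fun h => absurd h hp⟩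
  choose ka ia hia using hAw
  -- witness data for even removals
  have hBw : ∀ p : Fin n, ∃ k : ℕ, p ∈ B →
      (p ∈ P (2 * k + 1) ∧ ∀ q ∈ P (2 * k + 1), q ≠ p → ℓ p < ℓ q) := by
    intro p
    by_cases hp : p ∈ B
    · obtain ⟨k, hk1, hk2⟩ := hp
      rw [heven k] at hk2
      have : p ∈ {p ∈ P (2 * k + 1) | ∀ q ∈ P (2 * k + 1), q ≠ p → ℓ p < ℓ q} := by
        by_contra hc
        exact hk2 ⟨hk1, hc⟩
      exact ⟨k, fun _ => ⟨hk1, this.2⟩⟩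
    · exact ⟨0, fun h => absurd h hp⟩
  choose kb hkb using hBw
  -- injectivity of the round assignment on A
  have hAinj : Set.InjOn ia A := by
    have key : ∀ p p', p ∈ A → p' ∈ A → ka p ≤ ka p' → ia p = ia p' → p = p' := by
      intro p p' hp hp' hle heq
      by_contra hne
      obtain ⟨h0, h1, h2, h3, h4⟩ := hia p hp
      obtain ⟨h0', h1', h2', h3', h4'⟩ := hia p' hp'
      have hmem' : p' ∈ P (2 * ka p) :=
        hmono (2 * ka p) (2 * ka p') (by omega) h0'
      exact h4 p' hmem' (fun h => hne h.symm) (heq ▸ h3')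
    intro p hp p' hp' heq
    rcases le_total (ka p) (ka p') with h | h
    · exact key p p' hp hp' h heq
    · exact (key p' p hp' hp h heq.symm).symm
  -- injectivity of the length assignment on B
  have hBinj : Set.InjOn ℓ B := by
    have key : ∀ p p', p ∈ B → p' ∈ B → kb p ≤ kb p' → ℓ p = ℓ p' → p = p' := by
      intro p p' hp hp' hle heq
      by_contra hne
      obtain ⟨h1, h2⟩ := hkb p hp
      obtain ⟨h1', h2'⟩ := hkb p' hp'
      have hmem' : p' ∈ P (2 * kb p + 1) :=
        hmono (2 * kb p + 1) (2 * kb p' + 1) (by omega) h1'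
      have := h2 p' hmem' (fun h => hne h.symm)
      omega
    intro p hp p' hp' heq
    rcases le_total (kb p) (kb p') with h | h
    · exact key p p' hp hp' h heq
    · exact (key p' p hp' hp h heq.symm).symm
  -- cardinality bounds
  have hAcard : A.ncard ≤ T := by
    have : A.ncard ≤ (↑(Finset.Icc 1 T) : Set ℕ).ncard := by
      apply Set.ncard_le_ncard_of_injOn ia
      · intro p hp
        obtain ⟨-, h1, h2, -, -⟩ := hia p hp
        simp only [Finset.coe_Icc, Set.mem_Icc]; omega
      · exact hAinj
    rwa [Set.ncard_coe_finset, Nat.card_Icc, Nat.add_sub_cancel] at this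
  have hBcard : B.ncard ≤ T := by
    have : B.ncard ≤ (↑(Finset.Icc 1 T) : Set ℕ).ncard := by
      apply Set.ncard_le_ncard_of_injOn ℓ
      · intro p hp
        have := hℓ p
        simp only [Finset.coe_Icc, Set.mem_Icc]; omega
      · exact hBinj
    rwa [Set.ncard_coe_finset, Nat.card_Icc, Nat.add_sub_cancel] at this
  have hcompl : ((P j₀)ᶜ).ncard ≤ 2 * T := by
    calc ((P j₀)ᶜ).ncard ≤ (A ∪ B).ncard :=
          Set.ncard_le_ncard hdecomp (Set.toFinite _)
      _ ≤ A.ncard + B.ncard := Set.ncard_union_le A B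
      _ ≤ 2 * T := by omega
  have htotal : (P j₀).ncard + ((P j₀)ᶜ).ncard = n := by
    rw [Set.ncard_add_ncard_compl, Nat.card_eq_fintype_card, Fintype.card_fin]
  constructor
  · omega
  · intro h; omega
end

section
/- Cardinality lower bound along the removal sequence: For every index j ≥ 0, the set P_j of the removal sequence satisfies |P_j| ≥ n − 2T. In particular, if n ≥ 2T + 2 then |P_j| ≥ 2 for all j. -/
/-- Cardinality lower bound along the removal sequence. -/
theorem removal_sequence_card_lower_bound (n T : ℕ) (hT : 0 < T)
    (ℓ : Fin n → ℕ) (π : Fin n → ℕ → Bool)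
    (hℓ : ∀ p : Fin n, 1 ≤ ℓ p ∧ ℓ p ≤ T)
    (P : ℕ → Set (Fin n))
    (hP0 : P 0 = Set.univ)
    (hodd : ∀ j : ℕ, P (2 * j + 1) = P (2 * j) \
      {p ∈ P (2 * j) | ∃ i : ℕ, 1 ≤ i ∧ i ≤ T ∧ (i ≤ ℓ p ∧ π p i = true) ∧
        ∀ q ∈ P (2 * j), q ≠ p → ¬ (i ≤ ℓ q ∧ π q i = true)})
    (heven : ∀ j : ℕ, P (2 * j + 2) = P (2 * j + 1) \
      {p ∈ P (2 * j + 1) | ∀ q ∈ P (2 * j + 1), q ≠ p → ℓ p < ℓ q}) :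
    (∀ j : ℕ, n - 2 * T ≤ (P j).ncard) ∧
      (2 * T + 2 ≤ n → ∀ j : ℕ, 2 ≤ (P j).ncard) := by
  classical
  -- P is decreasing
  have hstep : ∀ k : ℕ, P (k + 1) ⊆ P k := by
    intro k
    rcases Nat.even_or_odd k with ⟨j, hj⟩ | ⟨j, hj⟩
    · have : k = 2 * j := by omega
      rw [this, hodd j]; exact Set.diff_subset
    · have : k + 1 = 2 * j + 2 := by omega
      rw [show k = 2 * j + 1 by omega] at *
      rw [heven j]; exact Set.diff_subset
  have hmono : ∀ a b : ℕ, a ≤ b → P b ⊆ P a := by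
    intro a b hab
    induction b with
    | zero => have : a = 0 := by omega
              rw [this]
    | succ b ih =>
      rcases Nat.lt_or_ge a (b + 1) with h | h
      · exact (hstep b).trans (ih (by omega))
      · have : a = b + 1 := by omega
        rw [this]
  -- the per-process case condition at a removal step m, with value v
  set C : Fin n → (ℕ ⊕ ℕ) → ℕ → Prop := fun p v m =>
    (∃ i : ℕ, v = Sum.inl i ∧ 1 ≤ i ∧ i ≤ T ∧ i ≤ ℓ p ∧ π p i = true ∧
        p ∈ P (2 * m) ∧ ∀ q ∈ P (2 * m), q ≠ p → ¬ (i ≤ ℓ q ∧ π q i = true)) ∨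
    (v = Sum.inr (ℓ p) ∧ p ∈ P (2 * m + 1) ∧
        ∀ q ∈ P (2 * m + 1), q ≠ p → ℓ p < ℓ q) with hC
  -- every removed process satisfies C for some v and m
  have hexists : ∀ p : Fin n, ∃ v : ℕ ⊕ ℕ, (∃ j, p ∉ P j) → ∃ m, C p v m := by
    intro p
    by_cases hp : ∃ j, p ∉ P j
    swap
    · exact ⟨Sum.inl 0, fun h => absurd h hp⟩
    obtain ⟨j, hpj⟩ := hp
    -- find a step k with p ∈ P k, p ∉ P (k+1)
    have hk : ∃ k, p ∈ P k ∧ p ∉ P (k + 1) := by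
      induction j with
      | zero => exact absurd (hP0 ▸ Set.mem_univ p) hpj
      | succ j ih =>
        by_cases hpj' : p ∈ P j
        · exact ⟨j, hpj', hpj⟩
        · exact ih hpj'
    obtain ⟨k, hpin, hpout⟩ := hk
    rcases Nat.even_or_odd k with ⟨m, hm⟩ | ⟨m, hm⟩
    · -- k = 2m, removed at odd step
      have hk2 : k = 2 * m := by omega
      rw [hk2] at hpin hpout
      rw [hodd m] at hpout
      have hpsep : p ∈ {p ∈ P (2 * m) | ∃ i : ℕ, 1 ≤ i ∧ i ≤ T ∧ (i ≤ ℓ p ∧ π p i = true) ∧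
          ∀ q ∈ P (2 * m), q ≠ p → ¬ (i ≤ ℓ q ∧ π q i = true)} := by
        by_contra hcon
        exact hpout ⟨hpin, hcon⟩
      obtain ⟨-, i, h1, h2, ⟨h3, h4⟩, h5⟩ := hpsep
      exact ⟨Sum.inl i, fun _ => ⟨m, Or.inl ⟨i, rfl, h1, h2, h3, h4, hpin, h5⟩⟩⟩
    · -- k = 2m+1, removed at even step
      have hk2 : k = 2 * m + 1 := by omega
      rw [hk2] at hpin hpout
      rw [show 2 * m + 1 + 1 = 2 * m + 2 by ring, heven m] at hpout
      have hpsep : p ∈ {p ∈ P (2 * m + 1) | ∀ q ∈ P (2 * m + 1), q ≠ p → ℓ p < ℓ q} := by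
        by_contra hcon
        exact hpout ⟨hpin, hcon⟩
      obtain ⟨-, h5⟩ := hpsep
      exact ⟨Sum.inr (ℓ p), fun _ => ⟨m, Or.inr ⟨rfl, hpin, h5⟩⟩⟩
  choose f hf using hexists
  -- key: two distinct removed processes get distinct values
  have key : ∀ (p q : Fin n) (v : ℕ ⊕ ℕ) (mp mq : ℕ), mp ≤ mq → p ≠ q →
      C p v mp → C q v mq → False := by
    intro p q v mp mq hle hne hp hq
    rcases hp with ⟨i, hvi, h1, h2, h3, h4, hpin, huniq⟩ | ⟨hvi, hpin, hmin⟩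
    · rcases hq with ⟨i', hvi', h1', h2', h3', h4', hqin, -⟩ | ⟨hvi', -, -⟩
      · have hii : i = i' := by rw [hvi] at hvi'; exact Sum.inl.inj hvi'
        have hq2 : q ∈ P (2 * mp) := hmono (2 * mp) (2 * mq) (by omega) hqin
        exact huniq q hq2 (Ne.symm hne) ⟨hii ▸ h3', hii ▸ h4'⟩
      · rw [hvi] at hvi'; exact Sum.inl_ne_inr hvi'
    · rcases hq with ⟨i', hvi', -⟩ | ⟨hvi', hqin, -⟩
      · rw [hvi] at hvi'; exact Sum.inr_ne_inl hvi'
      · have hll : ℓ p = ℓ q := by rw [hvi] at hvi'; exact (Sum.inr.inj hvi')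
        have hq2 : q ∈ P (2 * mp + 1) := hmono (2 * mp + 1) (2 * mq + 1) (by omega) hqin
        have := hmin q hq2 (Ne.symm hne)
        omega
  -- target set
  set t : Set (ℕ ⊕ ℕ) := (Sum.inl '' Set.Icc 1 T) ∪ (Sum.inr '' Set.Icc 1 T) with ht
  have htfin : t.Finite := by
    apply Set.Finite.union <;> exact (Set.finite_Icc _ _).image _
  have htcard : t.ncard = 2 * T := by
    rw [ht, Set.ncard_union_eq]
    · rw [Set.ncard_image_of_injective _ Sum.inl_injective,
        Set.ncard_image_of_injective _ Sum.inr_injective]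
      rw [show (Set.Icc 1 T : Set ℕ) = ↑(Finset.Icc 1 T) by simp, Set.ncard_coe_finset,
        Nat.card_Icc]
      omega
    · rw [Set.disjoint_left]
      rintro x ⟨a, -, rfl⟩ ⟨b, -, hb⟩
      exact Sum.inr_ne_inl hb
  -- main bound on the complement
  have hcompl : ∀ j : ℕ, ((P j)ᶜ : Set (Fin n)).ncard ≤ 2 * T := by
    intro j
    have hmaps : ∀ p ∈ ((P j)ᶜ : Set (Fin n)), f p ∈ t := by
      intro p hp
      obtain ⟨m, hm⟩ := hf p ⟨j, hp⟩
      rcases hm with ⟨i, hvi, h1, h2, -⟩ | ⟨hvi, -⟩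
      · exact Or.inl ⟨i, ⟨h1, h2⟩, hvi.symm⟩
      · exact Or.inr ⟨ℓ p, ⟨(hℓ p).1, (hℓ p).2⟩, hvi.symm⟩
    have hinj : Set.InjOn f ((P j)ᶜ : Set (Fin n)) := by
      intro p hp q hq heq
      by_contra hne
      obtain ⟨mp, hmp⟩ := hf p ⟨j, hp⟩
      obtain ⟨mq, hmq⟩ := hf q ⟨j, hq⟩
      rcases le_total mp mq with h | h
      · exact key p q (f p) mp mq h hne hmp (heq ▸ hmq)
      · exact key q p (f q) mq mp h (Ne.symm hne) hmq (heq ▸ hmp)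
    calc ((P j)ᶜ : Set (Fin n)).ncard ≤ t.ncard :=
          Set.ncard_le_ncard_of_injOn f hmaps hinj htfin
      _ = 2 * T := htcard
  have hmain : ∀ j : ℕ, n - 2 * T ≤ (P j).ncard := by
    intro j
    have hsum := Set.ncard_add_ncard_compl (P j)
    simp only [Set.ncard_univ, Nat.card_eq_fintype_card, Fintype.card_fin] at hsum
    have := hcompl j
    omega
  refine ⟨hmain, fun hn j => ?_⟩
  have := hmain j
  omega
end

section
/- At most T processes are ever removed by the odd-step rule: the set ⋃_{j≥0} (P_{2j} \ P_{2j+1}) of all processes removed while constructing some P_{2j+1} from P_{2j} has cardinality at most T. (Equivalently, for each round i ∈ {1,...,T}, at most one process is ever removed with witness round i: once a process that was the unique transmitter at round i among the current set is removed, no remaining process transmits at round i.) -/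
/-- At most `T` processes are ever removed by the odd-step rule. -/
theorem odd_rule_removes_at_most_T (n T : ℕ) (hT : 0 < T)
    (ℓ : Fin n → ℕ) (π : Fin n → ℕ → Bool)
    (hℓ : ∀ p : Fin n, 1 ≤ ℓ p ∧ ℓ p ≤ T)
    (P : ℕ → Set (Fin n))
    (hP0 : P 0 = Set.univ)
    (hodd : ∀ j : ℕ, P (2 * j + 1) = P (2 * j) \
      {p ∈ P (2 * j) | ∃ i : ℕ, 1 ≤ i ∧ i ≤ T ∧ (i ≤ ℓ p ∧ π p i = true) ∧
        ∀ q ∈ P (2 * j), q ≠ p → ¬ (i ≤ ℓ q ∧ π q i = true)})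
    (heven : ∀ j : ℕ, P (2 * j + 2) = P (2 * j + 1) \
      {p ∈ P (2 * j + 1) | ∀ q ∈ P (2 * j + 1), q ≠ p → ℓ p < ℓ q}) :
    (⋃ j : ℕ, P (2 * j) \ P (2 * j + 1)).ncard ≤ T := by
  classical
  set S := ⋃ j : ℕ, P (2 * j) \ P (2 * j + 1) with hS
  -- P is antitone
  have hstep : ∀ k, P (k + 1) ⊆ P k := by
    intro k
    rcases Nat.even_or_odd k with ⟨j, hj⟩ | ⟨j, hj⟩
    · have : k = 2 * j := by omega
      subst this
      rw [hodd j]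
      exact Set.diff_subset
    · have : k = 2 * j + 1 := by omega
      subst this
      rw [heven j]
      exact Set.diff_subset
  have hanti : Antitone P := antitone_nat_of_succ_le hstep
  -- property: p was removed with witness round i
  have hQ : ∀ p ∈ S, ∃ i : ℕ, 1 ≤ i ∧ i ≤ T ∧ (i ≤ ℓ p ∧ π p i = true) ∧
      ∃ j, p ∈ P (2 * j) ∧ ∀ q ∈ P (2 * j), q ≠ p → ¬ (i ≤ ℓ q ∧ π q i = true) := by
    intro p hp
    rcases Set.mem_iUnion.mp hp with ⟨j, hpj⟩
    obtain ⟨hp1, hp2⟩ := hpj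
    rw [hodd j] at hp2
    have : p ∈ {p ∈ P (2 * j) | ∃ i : ℕ, 1 ≤ i ∧ i ≤ T ∧ (i ≤ ℓ p ∧ π p i = true) ∧
        ∀ q ∈ P (2 * j), q ≠ p → ¬ (i ≤ ℓ q ∧ π q i = true)} := by
      by_contra h
      exact hp2 ⟨hp1, h⟩
    obtain ⟨-, i, h1, h2, h3, h4⟩ := this
    exact ⟨i, h1, h2, h3, j, hp1, h4⟩
  choose! g hg1 hg2 hg3 hg4 using hQ
  have hinj : Set.InjOn g S := by
    intro p hp p' hp' heq
    by_contra hne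
    obtain ⟨j, hpj, hju⟩ := hg4 p hp
    obtain ⟨j', hpj', hju'⟩ := hg4 p' hp'
    rcases le_total j j' with h | h
    · have hp'in : p' ∈ P (2 * j) := hanti (by omega) hpj'
      have := hju p' hp'in (Ne.symm hne)
      rw [heq] at this
      exact this (hg3 p' hp')
    · have hpin : p ∈ P (2 * j') := hanti (by omega) hpj
      have := hju' p hpin hne
      rw [← heq] at this
      exact this (hg3 p hp)
  have hsub : g '' S ⊆ Set.Icc 1 T := by
    rintro _ ⟨p, hp, rfl⟩
    exact ⟨hg1 p hp, hg2 p hp⟩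
  calc S.ncard = (g '' S).ncard := (Set.ncard_image_of_injOn hinj).symm
    _ ≤ (Set.Icc 1 T).ncard := Set.ncard_le_ncard hsub (Set.finite_Icc 1 T)
    _ ≤ T := by rw [Set.ncard_eq_toFinset_card']; simp
end

section
/- At most T processes are ever removed by the even-step rule: the set ⋃_{j≥0} (P_{2j+1} \ P_{2j+2}) of all processes removed while constructing some P_{2j+2} from P_{2j+1} has cardinality at most T. (Equivalently, the length function ℓ is injective on the set of all processes removed at even steps: each even step removes at most the unique process of strictly minimal length, and after such a removal all remaining processes have strictly larger lengths.) -/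
/-- At most `T` processes are ever removed by the even-step rule. -/
theorem even_rule_removes_at_most_T (n T : ℕ) (hT : 0 < T)
    (ℓ : Fin n → ℕ) (π : Fin n → ℕ → Bool)
    (hℓ : ∀ p : Fin n, 1 ≤ ℓ p ∧ ℓ p ≤ T)
    (P : ℕ → Set (Fin n))
    (hP0 : P 0 = Set.univ)
    (hodd : ∀ j : ℕ, P (2 * j + 1) = P (2 * j) \
      {p ∈ P (2 * j) | ∃ i : ℕ, 1 ≤ i ∧ i ≤ T ∧ (i ≤ ℓ p ∧ π p i = true) ∧
        ∀ q ∈ P (2 * j), q ≠ p → ¬ (i ≤ ℓ q ∧ π q i = true)})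
    (heven : ∀ j : ℕ, P (2 * j + 2) = P (2 * j + 1) \
      {p ∈ P (2 * j + 1) | ∀ q ∈ P (2 * j + 1), q ≠ p → ℓ p < ℓ q}) :
    (⋃ j : ℕ, P (2 * j + 1) \ P (2 * j + 2)).ncard ≤ T := by
  set S := ⋃ j : ℕ, P (2 * j + 1) \ P (2 * j + 2) with hS
  -- P is decreasing
  have hstep : ∀ k : ℕ, P (k + 1) ⊆ P k := by
    intro k
    rcases Nat.even_or_odd k with ⟨j, hj⟩ | ⟨j, hj⟩
    · have : k = 2 * j := by omega
      subst this
      rw [hodd j]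
      exact Set.diff_subset
    · have : k = 2 * j + 1 := by omega
      subst this
      rw [heven j]
      exact Set.diff_subset
  have hmono : ∀ a b : ℕ, a ≤ b → P b ⊆ P a := by
    intro a b hab
    induction b with
    | zero =>
      have : a = 0 := Nat.le_zero.mp hab
      subst this; exact subset_rfl
    | succ b ih =>
      rcases Nat.lt_succ_iff_lt_or_eq.mp (Nat.lt_succ_of_le hab) with h | h
      · exact (hstep b).trans (ih (Nat.lt_succ_iff.mp h))
      · subst h; exact subset_rfl
  -- characterize removal
  have hrem : ∀ j (p : Fin n), p ∈ P (2 * j + 1) \ P (2 * j + 2) →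
      p ∈ P (2 * j + 1) ∧ ∀ q ∈ P (2 * j + 1), q ≠ p → ℓ p < ℓ q := by
    intro j p hp
    rw [heven j] at hp
    obtain ⟨hp1, hp2⟩ := hp
    have : p ∈ {p ∈ P (2 * j + 1) | ∀ q ∈ P (2 * j + 1), q ≠ p → ℓ p < ℓ q} := by
      by_contra h
      exact hp2 ⟨hp1, h⟩
    exact ⟨hp1, this.2⟩
  -- ℓ is injective on S
  have hkey : ∀ j j' (p p' : Fin n), j ≤ j' →
      p ∈ P (2 * j + 1) \ P (2 * j + 2) → p' ∈ P (2 * j' + 1) \ P (2 * j' + 2) →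
      p ≠ p' → ℓ p < ℓ p' := by
    intro j j' p p' hjj hp hp' hne
    obtain ⟨hp1, hmin⟩ := hrem j p hp
    have hp'1 : p' ∈ P (2 * j + 1) :=
      hmono (2 * j + 1) (2 * j' + 1) (by omega) (hrem j' p' hp').1
    exact hmin p' hp'1 hne.symm
  have hinj : Set.InjOn ℓ S := by
    intro p hp p' hp' heq
    by_contra hne
    simp only [hS, Set.mem_iUnion] at hp hp'
    obtain ⟨j, hpj⟩ := hp
    obtain ⟨j', hpj'⟩ := hp'
    rcases le_total j j' with h | h
    · exact absurd heq (Nat.ne_of_lt (hkey j j' p p' h hpj hpj' hne))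
    · exact absurd heq.symm (Nat.ne_of_lt (hkey j' j p' p h hpj' hpj (Ne.symm hne)))
  have hSfin : S.Finite := Set.toFinite S
  have himg : ℓ '' S ⊆ Set.Icc 1 T := by
    rintro x ⟨p, _, rfl⟩
    exact ⟨(hℓ p).1, (hℓ p).2⟩
  calc S.ncard = (ℓ '' S).ncard := (Set.ncard_image_of_injOn hinj).symm
    _ ≤ (Set.Icc 1 T).ncard := Set.ncard_le_ncard himg (Set.finite_Icc 1 T)
    _ ≤ T := by rw [Set.ncard_eq_toFinset_card', Set.toFinset_Icc, Nat.card_Icc]; omega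
end

section
/- Error bound for Check_If_Single (Lemma 3, case k ≥ 2): Let ε ∈ (0,1], let k ≥ 2, and let ℓ be a positive integer with ℓ ≥ log₂(1/ε). With X : {1,...,ℓ} × {1,...,k} → {0,1} chosen uniformly at random, the probability that there exists a process p ∈ {1,...,k} that hears nothing throughout the procedure — i.e., such that for every pair j ∈ {1,...,ℓ} and every process q, X_{j,q} = X_{j,p} — is at most (1/2)^ℓ ≤ ε. Consequently, when k ≥ 2 processes execute Check_If_Single with ℓ = ⌈log₂(1/ε)⌉ pairs of rounds, with probability at least 1 − ε no process enters the critical section. -/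
/-- Error bound for `Check_If_Single` (Lemma 3, case `k ≥ 2`): if `ε ∈ (0,1]`,
`k ≥ 2` and `l ≥ log₂(1/ε)` is a positive integer, then the probability
(under the uniform measure on `Fin l × Fin k → Bool`) that some process `p`
hears nothing throughout the procedure — i.e. for every pair `j` all bits in
pair `j` equal `p`'s bit — is at most `(1/2)^l ≤ ε`; hence with probability at
least `1 - ε` no process enters the critical section. -/
theorem check_if_single_error_bound (ε : ℝ) (hε0 : 0 < ε) (hε1 : ε ≤ 1)
    (k l : ℕ) (hk : 2 ≤ k) (hl : 1 ≤ l)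
    (hlog : Real.logb 2 (1 / ε) ≤ (l : ℝ)) :
    ((Finset.univ.filter (fun X : Fin l × Fin k → Bool =>
        ∃ p : Fin k, ∀ j : Fin l, ∀ q : Fin k, X (j, q) = X (j, p))).card : ℝ)
      / (Fintype.card (Fin l × Fin k → Bool) : ℝ) ≤ (1 / 2 : ℝ) ^ l ∧
    (1 / 2 : ℝ) ^ l ≤ ε := by
  have hkpos : 0 < k := by omega
  constructor
  · -- count the event
    have hset : (Finset.univ.filter (fun X : Fin l × Fin k → Bool =>
        ∃ p : Fin k, ∀ j : Fin l, ∀ q : Fin k, X (j, q) = X (j, p))) =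
        Finset.image (fun f : Fin l → Bool => fun jq : Fin l × Fin k => f jq.1)
          Finset.univ := by
      ext X
      simp only [Finset.mem_filter, Finset.mem_univ, true_and, Finset.mem_image]
      constructor
      · rintro ⟨p, hp⟩
        refine ⟨fun j => X (j, p), funext fun jq => ?_⟩
        exact (hp jq.1 jq.2).symm
      · rintro ⟨f, hf⟩
        refine ⟨⟨0, hkpos⟩, fun j q => ?_⟩
        simp [← hf]
    have hinj : Function.Injective
        (fun f : Fin l → Bool => fun jq : Fin l × Fin k => f jq.1) := by
      intro f g hfg
      funext j
      have := congrFun hfg (j, ⟨0, hkpos⟩)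
      simpa using this
    have hcard : (Finset.univ.filter (fun X : Fin l × Fin k → Bool =>
        ∃ p : Fin k, ∀ j : Fin l, ∀ q : Fin k, X (j, q) = X (j, p))).card = 2 ^ l := by
      rw [hset, Finset.card_image_of_injective _ hinj]
      simp
    have htot : (Fintype.card (Fin l × Fin k → Bool)) = 2 ^ (l * k) := by
      simp [Fintype.card_fun]
    rw [hcard, htot]
    push_cast
    rw [div_le_iff₀ (by positivity)]
    have : ((1:ℝ)/2) ^ l * (2:ℝ) ^ (l * k) = 2 ^ (l * k) / 2 ^ l := by
      field_simp
      rw [← mul_pow]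
      norm_num
    rw [this, le_div_iff₀ (by positivity), ← pow_add]
    apply pow_le_pow_right₀ (by norm_num)
    nlinarith
  · -- (1/2)^l ≤ ε
    have h2 : (1:ℝ) < 2 := one_lt_two
    have hle : (1 / ε : ℝ) ≤ (2:ℝ) ^ (l:ℝ) := by
      have := (Real.logb_le_iff_le_rpow h2 (by positivity)).mp hlog
      exact this
    have h2l : (2:ℝ) ^ (l:ℝ) = (2:ℝ) ^ l := by
      rw [Real.rpow_natCast]
    rw [h2l] at hle
    have hpow : (0:ℝ) < (2:ℝ) ^ l := by positivity
    rw [div_le_iff₀ hε0] at hle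
    rw [div_pow, one_pow, div_le_iff₀ hpow]
    linarith [mul_comm ε ((2:ℝ)^l)]
end
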